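/- Let X be a locally convex topological vector space over 𝕂 (𝕂 = ℝ or ℂ), p a continuous seminorm on X, D a Banach disk in X, (xₙ) a sequence in X_D and (fₙ) a sequence of continuous linear functionals on X such that c = Σₙ p*(fₙ)·p_D(xₙ) < ∞. Then for every x ∈ X the series Σₙ fₙ(x)xₙ converges in X_D (hence in X), and the formula T x = Σₙ fₙ(x)xₙ defines a continuous linear operator on X satisfying p_D(Tx) ≤ c·p(x) for all x. -/

import Mathlib

open scoped ENNReal Pointwise
open Filter

noncomputable section

/-- The Banach-disk property: `D` is bounded, convex, balanced, and the span of `D`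
is complete with respect to the Minkowski gauge norm `p_D` of `D`. -/
def IsBanachDisk (𝕜 : Type*) [RCLike 𝕜] {X : Type*} [AddCommGroup X] [Module 𝕜 X]
    [Module ℝ X] [TopologicalSpace X] (D : Set X) : Prop :=
  Bornology.IsVonNBounded 𝕜 D ∧ Convex ℝ D ∧ Balanced 𝕜 D ∧
  ∀ u : ℕ → X, (∀ n, u n ∈ Submodule.span 𝕜 D) →
    (∀ ε : ℝ, 0 < ε → ∃ N, ∀ m, N ≤ m → ∀ n, N ≤ n → gauge D (u m - u n) < ε) →
    ∃ y ∈ Submodule.span 𝕜 D,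
      Filter.Tendsto (fun n => gauge D (y - u n)) Filter.atTop (nhds 0)

/-- `p*(f) = sup {|f x| : p x ≤ 1}`, the dual quantity of `f` relative to the seminorm
`p`, with values in `[0,∞]`. -/
def pStar {𝕜 X : Type*} [RCLike 𝕜] [AddCommGroup X] [Module 𝕜 X] [TopologicalSpace X]
    (p : Seminorm 𝕜 X) (f : X →L[𝕜] 𝕜) : ℝ≥0∞ :=
  ⨆ x ∈ {y : X | p y ≤ 1}, (‖f x‖₊ : ℝ≥0∞)


section helpers
variable {𝕜 : Type*} [RCLike 𝕜] {X : Type*} [AddCommGroup X] [Module 𝕜 X]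
    [Module ℝ X] [IsScalarTower ℝ 𝕜 X] {D : Set X}

lemma span_mem_smul (hconv : Convex ℝ D) (hbal : Balanced 𝕜 D) (hne : D.Nonempty)
    {z : X} (hz : z ∈ Submodule.span 𝕜 D) : ∃ r : ℝ, 0 < r ∧ z ∈ r • D := by
  have h0D : (0 : X) ∈ D := by
    obtain ⟨d, hd⟩ := hne
    have := hbal (0 : 𝕜) (by simp) (Set.smul_mem_smul_set hd)
    simpa using this
  induction hz using Submodule.span_induction with
  | mem d hd => exact ⟨1, one_pos, by rw [one_smul]; exact hd⟩
  | zero => exact ⟨1, one_pos, ⟨0, h0D, smul_zero 1⟩⟩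
  | add z w _ _ hz hw =>
    obtain ⟨r, hr, hzr⟩ := hz
    obtain ⟨s, hs, hws⟩ := hw
    refine ⟨r + s, by linarith, ?_⟩
    rw [hconv.add_smul hr.le hs.le]
    exact Set.add_mem_add hzr hws
  | smul a z _ hz =>
    obtain ⟨r, hr, hzr⟩ := hz
    rcases eq_or_ne a 0 with rfl | ha
    · exact ⟨1, one_pos, by rw [zero_smul]; exact ⟨0, h0D, smul_zero 1⟩⟩
    · obtain ⟨d, hd, rfl⟩ := hzr
      refine ⟨r * ‖a‖, mul_pos hr (norm_pos_iff.mpr ha), ?_⟩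
      have had : a • d ∈ ‖a‖ • D := by
        have hmem : (a * ((‖a‖ : ℝ) : 𝕜)⁻¹) • d ∈ D := by
          apply hbal (a * ((‖a‖ : ℝ) : 𝕜)⁻¹) _ (Set.smul_mem_smul_set hd)
          rw [norm_mul, norm_inv, RCLike.norm_ofReal, abs_norm]
          rw [mul_inv_le_iff₀ (norm_pos_iff.mpr ha), one_mul]
        refine ⟨_, hmem, ?_⟩
        show ‖a‖ • ((a * ((‖a‖ : ℝ) : 𝕜)⁻¹) • d) = a • d
        rw [RCLike.real_smul_eq_coe_smul (K := 𝕜), smul_smul]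
        congr 1
        have : ((‖a‖ : ℝ) : 𝕜) ≠ 0 := by
          simpa using norm_pos_iff.mpr ha |>.ne'
        field_simp
      have : a • (r • d) = r • (a • d) := by
        rw [RCLike.real_smul_eq_coe_smul (K := 𝕜) r d,
          RCLike.real_smul_eq_coe_smul (K := 𝕜) r (a • d), smul_smul, smul_smul, mul_comm]
      rw [this, ← smul_smul]
      exact Set.smul_mem_smul_set had

lemma gauge_lt_exists {z : X} {a : ℝ} (hne : {r : ℝ | 0 < r ∧ z ∈ r • D}.Nonempty)
    (h : gauge D z < a) : ∃ b, 0 < b ∧ b < a ∧ z ∈ b • D := by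
  obtain ⟨b, ⟨hb, hzb⟩, hba⟩ := exists_lt_of_csInf_lt hne h
  exact ⟨b, hb, hba, hzb⟩

lemma gauge_add_le'' (hconv : Convex ℝ D) {z w : X} {r s : ℝ}
    (hr : 0 < r) (hzr : z ∈ r • D) (hs : 0 < s) (hws : w ∈ s • D) :
    gauge D (z + w) ≤ gauge D z + gauge D w := by
  refine le_of_forall_pos_le_add fun ε hε => ?_
  obtain ⟨b, hb, hbl, hzb⟩ := gauge_lt_exists (D := D) ⟨r, hr, hzr⟩
    (lt_add_of_pos_right _ (half_pos hε))
  obtain ⟨b', hb', hbl', hwb⟩ := gauge_lt_exists (D := D) ⟨s, hs, hws⟩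
    (lt_add_of_pos_right _ (half_pos hε))
  have : z + w ∈ (b + b') • D := by
    rw [hconv.add_smul hb.le hb'.le]
    exact Set.add_mem_add hzb hwb
  calc gauge D (z + w) ≤ b + b' := gauge_le_of_mem (by positivity) this
    _ ≤ _ := by linarith

end helpers


section pstar
variable {𝕜 X : Type*} [RCLike 𝕜] [AddCommGroup X] [Module 𝕜 X] [TopologicalSpace X]
    (p : Seminorm 𝕜 X)

lemma le_pStar (f : X →L[𝕜] 𝕜) {z : X} (hz : p z ≤ 1) :
    (‖f z‖₊ : ℝ≥0∞) ≤ pStar p f :=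
  le_iSup₂ (f := fun x (_ : x ∈ {y : X | p y ≤ 1}) => ((‖f x‖₊ : ℝ≥0∞))) z hz


lemma pStar_bound (f : X →L[𝕜] 𝕜) (y : X) (hfin : pStar p f ≠ ⊤) :
    ENNReal.ofReal ‖f y‖ ≤ pStar p f * ENNReal.ofReal (p y) := by
  by_cases hpy : p y = 0
  · have hf0 : ‖f y‖ = 0 := by
      by_contra h
      have hpos : 0 < ‖f y‖ := lt_of_le_of_ne (norm_nonneg _) (Ne.symm h)
      set t : ℝ := ((pStar p f).toReal + 1) / ‖f y‖ with ht
      have ht0 : 0 ≤ t := by positivity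
      have hmem : p (((t : ℝ) : 𝕜) • y) ≤ 1 := by
        rw [map_smul_eq_mul, hpy, mul_zero]; norm_num
      have hle := le_pStar p f hmem
      rw [map_smul] at hle
      have h2 : ENNReal.ofReal ((pStar p f).toReal + 1) ≤ pStar p f := by
        calc ENNReal.ofReal ((pStar p f).toReal + 1)
            = ENNReal.ofReal ‖((t : ℝ) : 𝕜) • f y‖ := by
              rw [smul_eq_mul, norm_mul, RCLike.norm_ofReal, abs_of_nonneg ht0, ht,
                div_mul_cancel₀ _ hpos.ne']
          _ ≤ pStar p f := by rw [ofReal_norm]; exact hle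
      rw [ENNReal.ofReal_add ENNReal.toReal_nonneg zero_le_one,
        ENNReal.ofReal_toReal hfin, ENNReal.ofReal_one] at h2
      exact absurd h2 (by simp [ENNReal.lt_add_right hfin one_ne_zero] : ¬ _).elim
    simp [hf0]
  · have hppos : 0 < p y := lt_of_le_of_ne (apply_nonneg p y) (Ne.symm hpy)
    set z : X := (((p y : ℝ) : 𝕜))⁻¹ • y with hzdef
    have hz1 : p z ≤ 1 := by
      rw [hzdef, map_smul_eq_mul, norm_inv, RCLike.norm_ofReal, abs_of_nonneg hppos.le,
        inv_mul_cancel₀ hpy]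
    have hle := le_pStar p f hz1
    have hyz : ‖f y‖ = p y * ‖f z‖ := by
      have : y = (((p y : ℝ) : 𝕜)) • z := by
        rw [hzdef, smul_smul, mul_inv_cancel₀ (by simpa using hpy), one_smul]
      conv_lhs => rw [this]
      rw [map_smul, norm_smul, RCLike.norm_ofReal, abs_of_nonneg hppos.le]
    rw [hyz, ENNReal.ofReal_mul hppos.le, mul_comm]
    exact mul_le_mul' (by rw [ofReal_norm]; exact hle) le_rfl

end pstar

set_option maxHeartbeats 2000000 in
/-- Lemma nuc1, first part: if `c = Σₙ p*(fₙ)·p_D(xₙ) < ∞`, then for each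
`x` the series `Σₙ fₙ(x)·xₙ` converges in `X_D` (with respect to the gauge norm `p_D`,
hence also in `X`), and `T x = Σₙ fₙ(x)·xₙ` defines a continuous linear operator on `X`
with `p_D(T x) ≤ c·p(x)`. -/
theorem operator_from_absolutely_convergent_series
    (𝕜 : Type*) [RCLike 𝕜] (X : Type*) [AddCommGroup X] [Module 𝕜 X]
    [Module ℝ X] [IsScalarTower ℝ 𝕜 X]
    -- X is a locally convex TVS
    [TopologicalSpace X] [IsTopologicalAddGroup X] [ContinuousSMul 𝕜 X]
    [LocallyConvexSpace ℝ X]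
    -- a continuous seminorm p and a Banach disk D
    (p : Seminorm 𝕜 X) (hp : Continuous p)
    (D : Set X) (hD : IsBanachDisk 𝕜 D)
    -- the data of the series
    (x : ℕ → X) (hx : ∀ n, x n ∈ Submodule.span 𝕜 D)
    (f : ℕ → X →L[𝕜] 𝕜)
    (c : ℝ≥0∞) (hc : c = ∑' n : ℕ, pStar p (f n) * ENNReal.ofReal (gauge D (x n)))
    (hcfin : c < ⊤) :
    ∃ T : X →L[𝕜] X, ∀ y : X,
      T y ∈ Submodule.span 𝕜 D ∧
      Filter.Tendsto
        (fun N => gauge D (T y - ∑ n ∈ Finset.range N, f n y • x n))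
        Filter.atTop (nhds 0) ∧
      ENNReal.ofReal (gauge D (T y)) ≤ c * ENNReal.ofReal (p y) := by
  obtain ⟨hbd, hconv, hbal, hcomp⟩ := hD
  rcases D.eq_empty_or_nonempty with rfl | hne
  · -- empty disk: everything is trivial
    have hx0 : ∀ n, x n = 0 := fun n => by
      simpa [Submodule.span_empty, Submodule.mem_bot] using hx n
    refine ⟨0, fun y => ?_⟩
    refine ⟨Submodule.zero_mem _, ?_, ?_⟩
    · simpa [hx0, gauge_empty] using tendsto_const_nhds
    · simp [gauge_empty]
  -- notation
  set E := Submodule.span 𝕜 D with hE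
  -- membership facts
  have habs : ∀ z ∈ E, {r : ℝ | 0 < r ∧ z ∈ r • D}.Nonempty := fun z hz => by
    obtain ⟨r, hr, hzr⟩ := span_mem_smul hconv hbal hne hz
    exact ⟨r, hr, hzr⟩
  have gadd : ∀ z ∈ E, ∀ w ∈ E, gauge D (z + w) ≤ gauge D z + gauge D w := by
    intro z hz w hw
    obtain ⟨r, hr, hzr⟩ := span_mem_smul hconv hbal hne hz
    obtain ⟨s, hs, hws⟩ := span_mem_smul hconv hbal hne hw
    exact gauge_add_le'' hconv hr hzr hs hws
  have gneg : ∀ z : X, gauge D (-z) = gauge D z := fun z => by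
    rw [← neg_one_smul 𝕜 z, gauge_smul hbal]; simp
  -- each term of the series is dominated by c
  have key1 : ∀ n, pStar p (f n) * ENNReal.ofReal (gauge D (x n)) ≤ c := fun n => by
    rw [hc]; exact ENNReal.le_tsum n
  -- the basic estimates
  set w : X → ℕ → ℝ := fun y n => ‖f n y‖ * gauge D (x n) with hw
  have hwnn : ∀ y n, 0 ≤ w y n := fun y n => mul_nonneg (norm_nonneg _) (gauge_nonneg _)
  have key2 : ∀ y n, ENNReal.ofReal (w y n) ≤
      (pStar p (f n) * ENNReal.ofReal (gauge D (x n))) * ENNReal.ofReal (p y) := by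
    intro y n
    by_cases hg : gauge D (x n) = 0
    · simp [hw, hg]
    · have hgpos : 0 < gauge D (x n) := lt_of_le_of_ne (gauge_nonneg _) (Ne.symm hg)
      have hfin : pStar p (f n) ≠ ⊤ := by
        intro h
        have h1 := key1 n
        rw [h, ENNReal.top_mul (by simpa [ENNReal.ofReal_eq_zero] using hgpos.not_ge)] at h1
        exact absurd (top_le_iff.mp h1 ▸ hcfin) (lt_irrefl _)
      calc ENNReal.ofReal (w y n)
          = ENNReal.ofReal ‖f n y‖ * ENNReal.ofReal (gauge D (x n)) :=
            ENNReal.ofReal_mul (norm_nonneg _)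
        _ ≤ (pStar p (f n) * ENNReal.ofReal (p y)) * ENNReal.ofReal (gauge D (x n)) :=
            mul_le_mul_left (pStar_bound p (f n) y hfin) _
        _ = (pStar p (f n) * ENNReal.ofReal (gauge D (x n))) * ENNReal.ofReal (p y) := by
            ring
  have hsum_le : ∀ y, (∑' n, ENNReal.ofReal (w y n)) ≤ c * ENNReal.ofReal (p y) := by
    intro y
    calc (∑' n, ENNReal.ofReal (w y n))
        ≤ ∑' n, (pStar p (f n) * ENNReal.ofReal (gauge D (x n))) * ENNReal.ofReal (p y) :=
          ENNReal.tsum_le_tsum (key2 y)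
      _ = c * ENNReal.ofReal (p y) := by rw [ENNReal.tsum_mul_right, ← hc]
  have hsummable : ∀ y, Summable (w y) := by
    intro y
    have hne_top : (∑' n, ENNReal.ofReal (w y n)) ≠ ⊤ :=
      ((hsum_le y).trans_lt (ENNReal.mul_lt_top hcfin ENNReal.ofReal_lt_top)).ne
    have h1 : Summable (fun n => (w y n).toNNReal) := by
      rw [← ENNReal.tsum_coe_ne_top_iff_summable]
      simpa [ENNReal.ofReal] using hne_top
    have h2 := NNReal.summable_coe.mpr h1
    refine h2.congr fun n => ?_
    exact Real.coe_toNNReal _ (hwnn y n)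
  -- partial sums
  set S : X → ℕ → X := fun y N => ∑ n ∈ Finset.range N, f n y • x n with hS
  have hSmem : ∀ y N, S y N ∈ E := fun y N =>
    Submodule.sum_mem _ fun n _ => Submodule.smul_mem _ _ (hx n)
  have hgsingle : ∀ y n, gauge D (f n y • x n) = w y n := fun y n => by
    rw [hw]; exact gauge_smul hbal _ _
  have hgF : ∀ (y : X) (F : Finset ℕ), gauge D (∑ n ∈ F, f n y • x n) ≤ ∑ n ∈ F, w y n := by
    intro y F
    induction F using Finset.cons_induction with
    | empty => simp
    | cons a F ha ih =>
      rw [Finset.sum_cons, Finset.sum_cons]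
      calc gauge D (f a y • x a + ∑ n ∈ F, f n y • x n)
          ≤ gauge D (f a y • x a) + gauge D (∑ n ∈ F, f n y • x n) :=
            gadd _ (Submodule.smul_mem _ _ (hx a)) _
              (Submodule.sum_mem _ fun n _ => Submodule.smul_mem _ _ (hx n))
        _ ≤ w y a + ∑ n ∈ F, w y n := by
            rw [hgsingle]
            exact add_le_add_right (ih) _
  -- Cauchy estimates
  have hgS_diff : ∀ y m n, n ≤ m →
      gauge D (S y m - S y n) ≤ ∑ k ∈ Finset.range m, w y k - ∑ k ∈ Finset.range n, w y k := by
    intro y m n hnm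
    have hsub : S y m - S y n = ∑ k ∈ Finset.Ico n m, f k y • x k := by
      rw [hS]
      exact (Finset.sum_Ico_eq_sub _ hnm).symm
    rw [hsub, ← Finset.sum_Ico_eq_sub _ hnm]
    exact hgF y _
  have hcauchy : ∀ y, ∀ ε : ℝ, 0 < ε → ∃ N, ∀ m, N ≤ m → ∀ n, N ≤ n →
      gauge D (S y m - S y n) < ε := by
    intro y ε hε
    have hA : CauchySeq (fun N => ∑ k ∈ Finset.range N, w y k) :=
      ((hsummable y).hasSum.tendsto_sum_nat).cauchySeq
    obtain ⟨N, hN⟩ := Metric.cauchySeq_iff.mp hA ε hε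
    refine ⟨N, fun m hm n hn => ?_⟩
    have hd := hN m hm n hn
    rw [Real.dist_eq] at hd
    rcases le_total n m with h | h
    · exact lt_of_le_of_lt ((hgS_diff y m n h).trans (le_abs_self _)) hd
    · have := (hgS_diff y n m h).trans (le_abs_self _)
      rw [abs_sub_comm] at hd
      calc gauge D (S y m - S y n) = gauge D (S y n - S y m) := by
            rw [← gneg (S y n - S y m), neg_sub]
        _ < ε := lt_of_le_of_lt this hd
  -- the limit of the partial sums
  have hlim : ∀ y : X, ∃ z ∈ E, Tendsto (fun N => gauge D (z - S y N)) atTop (nhds 0) :=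
    fun y => hcomp (S y) (hSmem y) (hcauchy y)
  set lim : X → X := fun y => (hlim y).choose with hlimdef
  have hlimmem : ∀ y, lim y ∈ E := fun y => (hlim y).choose_spec.1
  have hlimtend : ∀ y, Tendsto (fun N => gauge D (lim y - S y N)) atTop (nhds 0) :=
    fun y => (hlim y).choose_spec.2
  -- uniqueness up to gauge-null elements
  have hzero : ∀ (y : X) (z : X), z ∈ E →
      Tendsto (fun N => gauge D (z - S y N)) atTop (nhds 0) →
      gauge D (z - lim y) = 0 := by
    intro y z hz ht
    have hbound : ∀ N, gauge D (z - lim y) ≤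
        gauge D (z - S y N) + gauge D (S y N - lim y) := by
      intro N
      have : z - lim y = (z - S y N) + (S y N - lim y) := by abel
      rw [this]
      exact gadd _ (Submodule.sub_mem _ hz (hSmem y N)) _
        (Submodule.sub_mem _ (hSmem y N) (hlimmem y))
    have ht2 : Tendsto (fun N => gauge D (S y N - lim y)) atTop (nhds 0) := by
      have : ∀ N, gauge D (S y N - lim y) = gauge D (lim y - S y N) := fun N => by
        rw [← gneg (lim y - S y N), neg_sub]
      simpa [this] using hlimtend y
    have hsum : Tendsto (fun N => gauge D (z - S y N) + gauge D (S y N - lim y))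
        atTop (nhds 0) := by simpa using ht.add ht2
    have hle : gauge D (z - lim y) ≤ 0 := ge_of_tendsto' hsum hbound
    exact le_antisymm hle (gauge_nonneg _)
  -- the gauge-null submodule of E
  set N' : Submodule 𝕜 E := {
    carrier := {z : E | gauge D (z : X) = 0}
    add_mem' := fun {a b} ha hb => by
      have h1 := gadd (a : X) a.2 (b : X) b.2
      have ha' : gauge D (a : X) = 0 := ha
      have hb' : gauge D (b : X) = 0 := hb
      have h2 : gauge D ((a + b : E) : X) ≤ 0 := by
        rw [Submodule.coe_add]
        simpa [ha', hb'] using h1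
      exact le_antisymm h2 (gauge_nonneg _)
    zero_mem' := by simp [gauge_zero]
    smul_mem' := fun a z hz => by
      show gauge D ((a • z : E) : X) = 0
      rw [Submodule.coe_smul, gauge_smul hbal, hz, mul_zero] } with hN'
  have hN'mem : ∀ z : E, z ∈ N' ↔ gauge D (z : X) = 0 := fun z => Iff.rfl
  -- sums of partial sums
  have hSadd : ∀ y z N, S (y + z) N = S y N + S z N := by
    intro y z N
    rw [hS, ← Finset.sum_add_distrib]
    refine Finset.sum_congr rfl fun n _ => ?_
    rw [map_add, add_smul]
  have hSsmul : ∀ (a : 𝕜) y N, S (a • y) N = a • S y N := by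
    intro a y N
    rw [hS, Finset.smul_sum]
    refine Finset.sum_congr rfl fun n _ => ?_
    rw [map_smul, smul_eq_mul, mul_smul]
  -- additivity of the limit modulo N'
  have hlim_add : ∀ y z : X, gauge D ((lim y + lim z) - lim (y + z)) = 0 := by
    intro y z
    have h1 : Tendsto (fun N => gauge D ((lim y + lim z) - S (y + z) N)) atTop (nhds 0) := by
      have hb : ∀ N, gauge D ((lim y + lim z) - S (y + z) N) ≤
          gauge D (lim y - S y N) + gauge D (lim z - S z N) := by
        intro N
        have : (lim y + lim z) - S (y + z) N = (lim y - S y N) + (lim z - S z N) := by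
          rw [hSadd]; abel
        rw [this]
        exact gadd _ (Submodule.sub_mem _ (hlimmem y) (hSmem y N)) _
          (Submodule.sub_mem _ (hlimmem z) (hSmem z N))
      have hs : Tendsto (fun N => gauge D (lim y - S y N) + gauge D (lim z - S z N))
          atTop (nhds 0) := by simpa using (hlimtend y).add (hlimtend z)
      exact squeeze_zero (fun N => gauge_nonneg _) hb hs
    exact hzero (y + z) _ (Submodule.add_mem _ (hlimmem y) (hlimmem z)) h1
  have hlim_smul : ∀ (a : 𝕜) (y : X), gauge D (a • lim y - lim (a • y)) = 0 := by
    intro a y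
    have h1 : Tendsto (fun N => gauge D (a • lim y - S (a • y) N)) atTop (nhds 0) := by
      have heq : ∀ N, gauge D (a • lim y - S (a • y) N) = ‖a‖ * gauge D (lim y - S y N) := by
        intro N
        rw [hSsmul, ← smul_sub, gauge_smul hbal]
      have : Tendsto (fun N => ‖a‖ * gauge D (lim y - S y N)) atTop (nhds 0) := by
        simpa using (hlimtend y).const_mul ‖a‖
      simpa [heq] using this
    exact hzero _ _ (Submodule.smul_mem _ _ (hlimmem y)) h1
  -- the quotient map
  set limE : X → E := fun y => ⟨lim y, hlimmem y⟩ with hlimE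
  set Tq : X →ₗ[𝕜] (E ⧸ N') := {
    toFun := fun y => Submodule.Quotient.mk (limE y)
    map_add' := fun y z => by
      rw [← Submodule.Quotient.mk_add]
      rw [Submodule.Quotient.eq]
      show gauge D ((limE (y + z) - (limE y + limE z) : E) : X) = 0
      have : ((limE (y + z) - (limE y + limE z) : E) : X)
          = -((lim y + lim z) - lim (y + z)) := by
        first
        | (simp [hlimE]; abel)
        | simp [hlimE]
        | (simp only [hlimE, Submodule.coe_sub, Submodule.coe_add]; abel)
      rw [this, gneg]
      exact hlim_add y z
    map_smul' := fun a y => by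
      rw [RingHom.id_apply, ← Submodule.Quotient.mk_smul]
      rw [Submodule.Quotient.eq]
      show gauge D ((limE (a • y) - a • limE y : E) : X) = 0
      have : ((limE (a • y) - a • limE y : E) : X) = -(a • lim y - lim (a • y)) := by
        simp [hlimE]
      rw [this, gneg]
      exact hlim_smul a y } with hTq
  -- a linear section of the quotient map
  obtain ⟨σ, hσ⟩ := N'.mkQ.exists_rightInverse_of_surjective N'.range_mkQ
  set Tlin : X →ₗ[𝕜] X := E.subtype ∘ₗ σ ∘ₗ Tq with hTlin
  have hTmem : ∀ y, Tlin y ∈ E := fun y => (σ (Tq y)).2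
  -- Tlin y agrees with lim y modulo gauge-null
  have hTnull : ∀ y, gauge D (Tlin y - lim y) = 0 := by
    intro y
    have h1 : N'.mkQ (σ (Tq y)) = Tq y := by
      rw [← LinearMap.comp_apply, hσ, LinearMap.id_apply]
    have h2 : N'.mkQ (σ (Tq y)) = N'.mkQ (limE y) := by
      rw [h1]; rfl
    have h3 : σ (Tq y) - limE y ∈ N' := by
      rwa [← Submodule.Quotient.eq, ← Submodule.mkQ_apply, ← Submodule.mkQ_apply]
    exact h3
  -- convergence of partial sums to Tlin y
  have htend : ∀ y, Tendsto (fun N => gauge D (Tlin y - S y N)) atTop (nhds 0) := by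
    intro y
    have hb : ∀ N, gauge D (Tlin y - S y N) ≤
        gauge D (Tlin y - lim y) + gauge D (lim y - S y N) := by
      intro N
      have : Tlin y - S y N = (Tlin y - lim y) + (lim y - S y N) := by abel
      rw [this]
      exact gadd _ (Submodule.sub_mem _ (hTmem y) (hlimmem y)) _
        (Submodule.sub_mem _ (hlimmem y) (hSmem y N))
    have hs : Tendsto (fun N => gauge D (Tlin y - lim y) + gauge D (lim y - S y N))
        atTop (nhds 0) := by
      simpa [hTnull y] using hlimtend y
    exact squeeze_zero (fun N => gauge_nonneg _) hb hs
  -- the quantitative bound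
  have hboundR : ∀ y, gauge D (Tlin y) ≤ ∑' n, w y n := by
    intro y
    have hb : ∀ N, gauge D (Tlin y) ≤ gauge D (Tlin y - S y N) + (∑' n, w y n) := by
      intro N
      have h1 : gauge D (Tlin y) ≤ gauge D (Tlin y - S y N) + gauge D (S y N) := by
        have : Tlin y = (Tlin y - S y N) + S y N := by abel
        conv_lhs => rw [this]
        exact gadd _ (Submodule.sub_mem _ (hTmem y) (hSmem y N)) _ (hSmem y N)
      have h2 : gauge D (S y N) ≤ ∑' n, w y n :=
        (hgF y _).trans (Summable.sum_le_tsum _ (fun n _ => hwnn y n) (hsummable y))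
      linarith
    have hs : Tendsto (fun N => gauge D (Tlin y - S y N) + (∑' n, w y n))
        atTop (nhds (∑' n, w y n)) := by
      simpa using (htend y).add_const (∑' n, w y n)
    exact ge_of_tendsto' hs hb
  have hboundE : ∀ y, ENNReal.ofReal (gauge D (Tlin y)) ≤ c * ENNReal.ofReal (p y) := by
    intro y
    calc ENNReal.ofReal (gauge D (Tlin y)) ≤ ENNReal.ofReal (∑' n, w y n) :=
        ENNReal.ofReal_le_ofReal (hboundR y)
      _ = ∑' n, ENNReal.ofReal (w y n) :=
        ENNReal.ofReal_tsum_of_nonneg (hwnn y) (hsummable y)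
      _ ≤ c * ENNReal.ofReal (p y) := hsum_le y
  -- continuity
  have hcont : Continuous Tlin := by
    apply continuous_of_continuousAt_zero Tlin
    rw [ContinuousAt, map_zero]
    rw [(nhds_basis_balanced 𝕜 X).tendsto_right_iff]
    rintro W ⟨hW1, hW2⟩
    -- W absorbs D
    obtain ⟨r, hr⟩ := absorbs_iff_norm.mp (hbd hW1)
    set a₀ : 𝕜 := ((max r 1 : ℝ) : 𝕜) with ha₀
    have hna : ‖a₀‖ = max r 1 := by
      rw [ha₀, RCLike.norm_ofReal, abs_of_pos (lt_of_lt_of_le one_pos (le_max_right r 1))]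
    have hna1 : 1 ≤ ‖a₀‖ := by rw [hna]; exact le_max_right r 1
    have hDW : D ⊆ a₀ • W := hr a₀ (by rw [hna]; exact le_max_left r 1)
    -- small gauge forces membership in W
    have hsmall : ∀ z, z ∈ E → gauge D z < (2 * ‖a₀‖)⁻¹ → z ∈ W := by
      intro z hz hgz
      obtain ⟨b, hb0, hba, hzb⟩ := gauge_lt_exists (habs z hz) hgz
      obtain ⟨d, hd, rfl⟩ := hzb
      obtain ⟨w₁, hw₁, rfl⟩ := hDW hd
      show b • a₀ • w₁ ∈ W
      have hmem : b • a₀ • w₁ = (((b : ℝ) : 𝕜) * a₀) • w₁ := by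
        rw [RCLike.real_smul_eq_coe_smul (K := 𝕜), smul_smul]
      rw [hmem]
      refine hW2 _ ?_ (Set.smul_mem_smul_set hw₁)
      rw [norm_mul, RCLike.norm_ofReal, abs_of_pos hb0]
      have h1 : b * ‖a₀‖ < (2 * ‖a₀‖)⁻¹ * ‖a₀‖ :=
        mul_lt_mul_of_pos_right hba (lt_of_lt_of_le one_pos hna1)
      have h2 : (2 * ‖a₀‖)⁻¹ * ‖a₀‖ = 2⁻¹ := by
        rw [mul_inv]
        field_simp
      nlinarith
    -- the neighbourhood of 0 given by p
    set δ : ℝ := (2 * ‖a₀‖)⁻¹ / (c.toReal + 1) with hδ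
    have hδpos : 0 < δ := by
      apply div_pos (inv_pos.mpr (by nlinarith)) (by positivity)
    have hUnhds : {y : X | p y < δ} ∈ nhds (0 : X) := by
      have : IsOpen {y : X | p y < δ} := isOpen_lt hp continuous_const
      refine this.mem_nhds ?_
      show p 0 < δ
      rw [map_zero]
      exact hδpos
    filter_upwards [hUnhds] with y hy
    apply hsmall _ (hTmem y)
    -- convert the ENNReal bound to a real bound
    have hreal : gauge D (Tlin y) ≤ c.toReal * p y := by
      have h1 := hboundE y
      have h2 : (c * ENNReal.ofReal (p y)).toReal = c.toReal * p y := by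
        rw [ENNReal.toReal_mul, ENNReal.toReal_ofReal (apply_nonneg p y)]
      calc gauge D (Tlin y) = (ENNReal.ofReal (gauge D (Tlin y))).toReal := by
            rw [ENNReal.toReal_ofReal (gauge_nonneg _)]
        _ ≤ (c * ENNReal.ofReal (p y)).toReal := by
            apply ENNReal.toReal_mono _ h1
            exact (ENNReal.mul_lt_top hcfin ENNReal.ofReal_lt_top).ne
        _ = c.toReal * p y := h2
    have hct : (0:ℝ) ≤ c.toReal := ENNReal.toReal_nonneg
    calc gauge D (Tlin y) ≤ c.toReal * p y := hreal
      _ ≤ c.toReal * δ := mul_le_mul_of_nonneg_left hy.le hct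
      _ < (c.toReal + 1) * δ := by nlinarith
      _ = (2 * ‖a₀‖)⁻¹ := by
          rw [hδ, mul_div_assoc']
          rw [mul_comm, mul_div_assoc, div_self (by positivity), mul_one]
  refine ⟨⟨Tlin, hcont⟩, fun y => ⟨hTmem y, htend y, hboundE y⟩⟩
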